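/- Let Λ be a numerical semigroup with conductor c = λ_k and let λ_s (s > k) be an order-0 seed, Λ̃ = Λ \ {λ_s}. If s ≥ k + 2, then the only order-(s−2) seed of Λ̃ is λ_s + 1. -/

import Mathlib

/-- A numerical semigroup: a subset of ℕ containing 0, closed under addition,
with finite complement. -/
def IsNumericalSemigroup (S : Set ℕ) : Prop :=
  0 ∈ S ∧ (∀ a ∈ S, ∀ b ∈ S, a + b ∈ S) ∧ Sᶜ.Finite

/-- `nsElt S i` = λ_i, the i-th smallest element of `S` (λ_0 = 0 when 0 ∈ S). -/
noncomputable def nsElt (S : Set ℕ) (i : ℕ) : ℕ := Nat.nth (· ∈ S) i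

/-- The conductor: the smallest `c` such that every `n ≥ c` lies in `S`. -/
noncomputable def nsConductor (S : Set ℕ) : ℕ := sInf {c | ∀ n, c ≤ n → n ∈ S}

/-- The genus: the number of gaps. -/
noncomputable def nsGenus (S : Set ℕ) : ℕ := Sᶜ.ncard

/-- A generator: a nonzero element of `S` which is not a sum of two nonzero
elements of `S`. -/
def IsGenerator (S : Set ℕ) (σ : ℕ) : Prop :=
  σ ∈ S ∧ σ ≠ 0 ∧ ¬ ∃ a ∈ S, ∃ b ∈ S, a ≠ 0 ∧ b ≠ 0 ∧ a + b = σ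

/-- `nsDel S i` = Λ_i = Λ \ {λ_1, …, λ_i}. -/
def nsDel (S : Set ℕ) (i : ℕ) : Set ℕ := S \ (nsElt S '' Set.Icc 1 i)

theorem stmt15 (S : Set ℕ) (hS : IsNumericalSemigroup S) (k s : ℕ)
    (hk : nsElt S k = nsConductor S) (hs : k + 2 ≤ s)
    (hgen : IsGenerator S (nsElt S s)) :
    ∀ x, (x ∈ S \ {nsElt S s} ∧ nsElt S s < x ∧
        IsGenerator (nsDel S (s - 2) \ {nsElt S s}) (x + nsElt S (s - 2))) ↔
      x = nsElt S s + 1 := by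
  classical
  obtain ⟨h0, hadd, hfin⟩ := hS
  have hinf : (setOf (· ∈ S)).Infinite := by
    have := hfin.infinite_compl
    exact (by simpa using this : S.Infinite)
  -- the conductor works
  have hcne : {c | ∀ n, c ≤ n → n ∈ S}.Nonempty := by
    obtain ⟨u, hu⟩ := hfin.bddAbove
    exact ⟨u + 1, fun n hn => by
      by_contra hns
      exact absurd (hu hns) (by omega)⟩
  have hc : ∀ n, nsConductor S ≤ n → n ∈ S := Nat.sInf_mem hcne
  have hck : ∀ n, nsElt S k ≤ n → n ∈ S := by rw [hk]; exact hc
  -- λ_{k+t} = λ_k + t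
  have key : ∀ t, nsElt S (k + t) = nsElt S k + t := by
    intro t
    induction t with
    | zero => simp
    | succ t ih =>
      have hmem : (nsElt S (k + t) + 1) ∈ S := by
        apply hck
        have : nsElt S k ≤ nsElt S (k + t) :=
          (Nat.nth_monotone hinf) (Nat.le_add_right k t)
        omega
      have hcount : Nat.count (· ∈ S) (nsElt S (k + t) + 1) = k + t + 1 := by
        unfold nsElt at *
        exact Nat.count_nth_succ_of_infinite hinf (k + t)
      have := Nat.nth_count (p := (· ∈ S)) hmem
      rw [hcount] at this
      have e2 : Nat.nth (· ∈ S) (k + (t + 1)) = Nat.nth (· ∈ S) (k + t + 1) := rfl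
      unfold nsElt at *
      omega
  set a := nsElt S (s - 2) with ha
  have hs1 : nsElt S (s - 1) = a + 1 := by
    have h1 := key (s - 2 - k)
    have h2 := key (s - 1 - k)
    have e1 : k + (s - 2 - k) = s - 2 := by omega
    have e2 : k + (s - 1 - k) = s - 1 := by omega
    rw [e1] at h1; rw [e2] at h2
    omega
  have hs0 : nsElt S s = a + 2 := by
    have h1 := key (s - 2 - k)
    have h2 := key (s - k)
    have e1 : k + (s - 2 - k) = s - 2 := by omega
    have e2 : k + (s - k) = s := by omega
    rw [e1] at h1; rw [e2] at h2
    omega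
  have hca : nsElt S k ≤ a := by
    have h1 := key (s - 2 - k)
    have e1 : k + (s - 2 - k) = s - 2 := by omega
    rw [e1] at h1
    omega
  -- membership characterization of T = nsDel S (s-2) \ {λ_s}
  have hT : ∀ x, x ∈ nsDel S (s - 2) \ {nsElt S s} ↔ (x = 0 ∨ x = a + 1 ∨ a + 3 ≤ x) := by
    intro x
    constructor
    · rintro ⟨⟨hxS, hximg⟩, hxne⟩
      simp only [Set.mem_singleton_iff] at hxne
      rw [hs0] at hxne
      by_contra hcon
      push_neg at hcon
      obtain ⟨h1, h2, h3⟩ := hcon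
      -- x ∈ S, x ≠ 0, x ≤ a + 2, x ≠ a+1, x ≠ a+2; so x ≤ a = λ_{s-2}
      have hxa : x ≤ a := by omega
      have hnth : Nat.nth (· ∈ S) (Nat.count (· ∈ S) x) = x := Nat.nth_count hxS
      set j := Nat.count (· ∈ S) x with hj
      have hj0 : j ≠ 0 := by
        intro h
        rw [h] at hnth
        have h00 : Nat.nth (· ∈ S) 0 = 0 := by
          have := Nat.nth_count (p := (· ∈ S)) h0
          simpa using this
        omega
      have hjle : j ≤ s - 2 := by
        by_contra hjg
        push_neg at hjg
        have h1 : nsElt S (s - 1) ≤ Nat.nth (· ∈ S) j := by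
          have := (Nat.nth_strictMono hinf).monotone (show s - 1 ≤ j by omega)
          simpa [nsElt] using this
        omega
      exact hximg ⟨j, ⟨by omega, hjle⟩, hnth⟩
    · intro hx
      have hmono := (Nat.nth_strictMono hinf).monotone
      have himg : ∀ i ∈ Set.Icc 1 (s - 2), nsElt S i ≤ a := by
        intro i hi
        exact hmono hi.2
      have h00 : nsElt S 0 = 0 := by
        have := Nat.nth_count (p := (· ∈ S)) h0
        simpa [nsElt] using this
      have hpos : ∀ i ∈ Set.Icc 1 (s - 2), 1 ≤ nsElt S i := by
        intro i hi
        have := Nat.nth_strictMono hinf (show 0 < i from hi.1)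
        unfold nsElt
        omega
      rcases hx with h | h | h
      · refine ⟨⟨by rw [h]; exact h0, ?_⟩, ?_⟩
        · rintro ⟨i, hi, hie⟩
          have := hpos i hi
          omega
        · simp only [Set.mem_singleton_iff]
          omega
      · refine ⟨⟨?_, ?_⟩, ?_⟩
        · rw [h]; exact hck _ (by omega)
        · rintro ⟨i, hi, hie⟩
          have := himg i hi
          omega
        · simp only [Set.mem_singleton_iff]
          omega
      · refine ⟨⟨hck _ (by omega), ?_⟩, ?_⟩
        · rintro ⟨i, hi, hie⟩
          have := himg i hi
          omega
        · simp only [Set.mem_singleton_iff]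
          omega
  intro x
  constructor
  · rintro ⟨⟨hxS, hxne⟩, hxgt, hg⟩
    rw [hs0] at hxgt ⊢
    by_contra hne
    have hx4 : a + 4 ≤ x := by omega
    obtain ⟨hmem, hnz, hnsum⟩ := hg
    exact hnsum ⟨a + 1, (hT _).mpr (by omega), x - 1, (hT _).mpr (by omega),
      by omega, by omega, by omega⟩
  · intro hx
    subst hx
    refine ⟨⟨hck _ (by omega), ?_⟩, by omega, ?_, by omega, ?_⟩
    · simp only [Set.mem_singleton_iff]; omega
    · exact (hT _).mpr (by omega)
    · rintro ⟨u, hu, v, hv, hu0, hv0, huv⟩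
      rw [hT] at hu hv
      omega
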